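/- Let Γ be a positive monoid and A a Γ-graded algebra. Then the graded radical of A (the intersection of all maximal graded left ideals) equals Rad(A_ε) ⊕ ⨁_{γ≠ε} A_γ, where Rad(A_ε) is the Jacobson radical of the subalgebra A_ε. -/

import Mathlib

/-- `n` is a maximal left ideal of the degree-zero subalgebra `𝒜 0`
(formulated as a `K`-submodule of `A` contained in `𝒜 0`, closed under left
multiplication by `𝒜 0`, proper, and maximal among such). -/
def IsMaxLeftIdealOfDegZero {K : Type*} [Field K]
    {A : Type*} [Ring A] [Algebra K A] (𝒜0 : Submodule K A)
    (n : Submodule K A) : Prop :=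
  n ≤ 𝒜0 ∧ (∀ a ∈ 𝒜0, ∀ x ∈ n, a * x ∈ n) ∧ (1 : A) ∉ n ∧
    ∀ n' : Submodule K A, n' ≤ 𝒜0 → (∀ a ∈ 𝒜0, ∀ x ∈ n', a * x ∈ n') →
      (1 : A) ∉ n' → n ≤ n' → n' = n


open DirectSum

section helpers

variable {K : Type*} [Field K] {Γ : Type*} [AddMonoid Γ] [DecidableEq Γ]
    {A : Type*} [Ring A] [Algebra K A] (𝒜 : Γ → Submodule K A) [GradedAlgebra 𝒜]

/-- The sum of the nonzero-degree components. -/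
def Jhom : Submodule K A := ⨆ γ : Γ, ⨆ _ : γ ≠ 0, 𝒜 γ

lemma mem_Jhom {γ : Γ} (hγ : γ ≠ 0) {x : A} (hx : x ∈ 𝒜 γ) : x ∈ Jhom 𝒜 :=
  Submodule.mem_iSup_of_mem γ (Submodule.mem_iSup_of_mem hγ hx)

lemma Jhom_induction {p : A → Prop} {x : A} (hx : x ∈ Jhom 𝒜)
    (hmem : ∀ γ : Γ, γ ≠ 0 → ∀ y ∈ 𝒜 γ, p y) (h0 : p 0)
    (hadd : ∀ y z, p y → p z → p (y + z)) : p x := by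
  have he : Jhom 𝒜 = ⨆ γ : {γ : Γ // γ ≠ 0}, 𝒜 γ.1 := by
    rw [Jhom, iSup_subtype]
  rw [he] at hx
  exact Submodule.iSup_induction (motive := p) _ hx (fun γ y hy => hmem γ.1 γ.2 y hy) h0 hadd

lemma decompose_zero_of_mem_Jhom {x : A} (hx : x ∈ Jhom 𝒜) :
    (DirectSum.decompose 𝒜 x 0 : A) = 0 := by
  refine Jhom_induction 𝒜 (p := fun y => (DirectSum.decompose 𝒜 y 0 : A) = 0) hx (fun γ hγ y hy => ?_) (by simp) (fun y z hy hz => ?_)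
  · exact DirectSum.decompose_of_mem_ne 𝒜 hy hγ
  · simp [DirectSum.decompose_add, hy, hz]

lemma sub_decompose_zero_mem_Jhom (x : A) :
    x - (DirectSum.decompose 𝒜 x 0 : A) ∈ Jhom 𝒜 := by
  classical
  by_cases h0 : (0 : Γ) ∈ (DirectSum.decompose 𝒜 x).support
  · have h1 : x - (DirectSum.decompose 𝒜 x 0 : A)
        = ∑ i ∈ (DirectSum.decompose 𝒜 x).support.erase 0,
            (DirectSum.decompose 𝒜 x i : A) := by
      rw [Finset.sum_erase_eq_sub h0, DirectSum.sum_support_decompose 𝒜 x]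
    rw [h1]
    exact Submodule.sum_mem _ fun i hi =>
      mem_Jhom 𝒜 (Finset.ne_of_mem_erase hi) (SetLike.coe_mem _)
  · have hz : (DirectSum.decompose 𝒜 x 0 : A) = 0 := by
      rw [DFinsupp.notMem_support_iff.mp h0]; rfl
    rw [hz, sub_zero, ← DirectSum.sum_support_decompose 𝒜 x]
    refine Submodule.sum_mem _ fun i hi => ?_
    exact mem_Jhom 𝒜 (fun h => h0 (h ▸ hi)) (SetLike.coe_mem _)

lemma hom_mul_Jhom (hpos : ∀ γ₁ γ₂ : Γ, γ₁ + γ₂ = 0 → γ₁ = 0 ∧ γ₂ = 0)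
    {γ : Γ} {b : A} (hb : b ∈ 𝒜 γ) {x : A} (hx : x ∈ Jhom 𝒜) :
    b * x ∈ Jhom 𝒜 := by
  refine Jhom_induction 𝒜 (p := fun y => b * y ∈ Jhom 𝒜) hx (fun δ hδ y hy => ?_) (by simp) (fun y z hy hz => ?_)
  · exact mem_Jhom 𝒜 (fun h => hδ (hpos γ δ h).2) (SetLike.mul_mem_graded hb hy)
  · show b * (y + z) ∈ Jhom 𝒜
    rw [mul_add]; exact Submodule.add_mem _ hy hz

lemma mul_Jhom (hpos : ∀ γ₁ γ₂ : Γ, γ₁ + γ₂ = 0 → γ₁ = 0 ∧ γ₂ = 0)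
    (a : A) {x : A} (hx : x ∈ Jhom 𝒜) : a * x ∈ Jhom 𝒜 := by
  classical
  have h : a * x = ∑ i ∈ (DirectSum.decompose 𝒜 a).support,
      (DirectSum.decompose 𝒜 a i : A) * x := by
    rw [← Finset.sum_mul, DirectSum.sum_support_decompose 𝒜 a]
  rw [h]
  exact Submodule.sum_mem _ fun i _ => hom_mul_Jhom 𝒜 hpos (SetLike.coe_mem _) hx

lemma mul_mem_sup (hpos : ∀ γ₁ γ₂ : Γ, γ₁ + γ₂ = 0 → γ₁ = 0 ∧ γ₂ = 0)
    {n : Submodule K A} (hn0 : n ≤ 𝒜 0)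
    (hmul : ∀ a ∈ 𝒜 0, ∀ x ∈ n, a * x ∈ n) (a : A) {x : A}
    (hx : x ∈ n ⊔ Jhom 𝒜) : a * x ∈ n ⊔ Jhom 𝒜 := by
  classical
  obtain ⟨y, hy, s, hs, rfl⟩ := Submodule.mem_sup.mp hx
  rw [mul_add]
  refine Submodule.add_mem _ ?_ (Submodule.mem_sup_right (mul_Jhom 𝒜 hpos a hs))
  have h : a * y = ∑ i ∈ (DirectSum.decompose 𝒜 a).support,
      (DirectSum.decompose 𝒜 a i : A) * y := by
    rw [← Finset.sum_mul, DirectSum.sum_support_decompose 𝒜 a]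
  rw [h]
  refine Submodule.sum_mem _ fun i _ => ?_
  by_cases hi : i = 0
  · subst hi
    exact Submodule.mem_sup_left (hmul _ (SetLike.coe_mem _) y hy)
  · refine Submodule.mem_sup_right (mem_Jhom 𝒜 hi ?_)
    have h2 := SetLike.mul_mem_graded (SetLike.coe_mem (DirectSum.decompose 𝒜 a i)) (hn0 hy)
    rwa [add_zero] at h2

lemma isHom_sup {n : Submodule K A} (hn0 : n ≤ 𝒜 0) (i : Γ) {x : A}
    (hx : x ∈ n ⊔ Jhom 𝒜) : (DirectSum.decompose 𝒜 x i : A) ∈ n ⊔ Jhom 𝒜 := by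
  obtain ⟨y, hy, s, hs, rfl⟩ := Submodule.mem_sup.mp hx
  have hadd : (DirectSum.decompose 𝒜 (y + s) i : A)
      = (DirectSum.decompose 𝒜 y i : A) + (DirectSum.decompose 𝒜 s i : A) := by
    simp [DirectSum.decompose_add]
  rw [hadd]
  by_cases hi : i = 0
  · subst hi
    rw [DirectSum.decompose_of_mem_same 𝒜 (hn0 hy), decompose_zero_of_mem_Jhom 𝒜 hs, add_zero]
    exact Submodule.mem_sup_left hy
  · rw [DirectSum.decompose_of_mem_ne 𝒜 (hn0 hy) (Ne.symm hi), zero_add]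
    exact Submodule.mem_sup_right (mem_Jhom 𝒜 hi (SetLike.coe_mem _))

lemma decompose_zero_mem_of_mem_sup {n : Submodule K A} (hn0 : n ≤ 𝒜 0) {x : A}
    (hx : x ∈ n ⊔ Jhom 𝒜) : (DirectSum.decompose 𝒜 x 0 : A) ∈ n := by
  obtain ⟨y, hy, s, hs, rfl⟩ := Submodule.mem_sup.mp hx
  have h : (DirectSum.decompose 𝒜 (y + s) 0 : A) = y := by
    have hadd : (DirectSum.decompose 𝒜 (y + s) 0 : A)
        = (DirectSum.decompose 𝒜 y 0 : A) + (DirectSum.decompose 𝒜 s 0 : A) := by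
      simp [DirectSum.decompose_add]
    rw [hadd, DirectSum.decompose_of_mem_same 𝒜 (hn0 hy),
      decompose_zero_of_mem_Jhom 𝒜 hs, add_zero]
  rw [h]; exact hy

end helpers

section toideal

variable {K : Type*} [Field K] {A : Type*} [Ring A] [Algebra K A]

def toIdeal (p : Submodule K A) (h : ∀ (a : A) {x : A}, x ∈ p → a * x ∈ p) : Ideal A where
  carrier := p
  add_mem' := fun ha hb => p.add_mem ha hb
  zero_mem' := p.zero_mem
  smul_mem' := fun a x hx => h a hx

lemma mem_toIdeal {p : Submodule K A} {h} {x : A} : x ∈ toIdeal p h ↔ x ∈ p := Iff.rfl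

end toideal


open DirectSum

section helpers2

variable {K : Type*} [Field K] {Γ : Type*} [AddMonoid Γ] [DecidableEq Γ]
    {A : Type*} [Ring A] [Algebra K A] (𝒜 : Γ → Submodule K A) [GradedAlgebra 𝒜]

def supIdeal (hpos : ∀ γ₁ γ₂ : Γ, γ₁ + γ₂ = 0 → γ₁ = 0 ∧ γ₂ = 0)
    {n : Submodule K A} (hn0 : n ≤ 𝒜 0)
    (hmul : ∀ a ∈ 𝒜 0, ∀ x ∈ n, a * x ∈ n) : Ideal A :=
  toIdeal (n ⊔ Jhom 𝒜) (fun a _ hx => mul_mem_sup 𝒜 hpos hn0 hmul a hx)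

lemma mem_supIdeal {hpos} {n : Submodule K A} {hn0 : n ≤ 𝒜 0}
    {hmul : ∀ a ∈ 𝒜 0, ∀ x ∈ n, a * x ∈ n} {x : A} :
    x ∈ supIdeal 𝒜 hpos hn0 hmul ↔ x ∈ n ⊔ Jhom 𝒜 := Iff.rfl

lemma supIdeal_isHomogeneous {hpos} {n : Submodule K A} {hn0 : n ≤ 𝒜 0}
    {hmul : ∀ a ∈ 𝒜 0, ∀ x ∈ n, a * x ∈ n} :
    (supIdeal 𝒜 hpos hn0 hmul).IsHomogeneous 𝒜 :=
  fun i r hr => isHom_sup 𝒜 hn0 i hr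

lemma one_mem_supIdeal {hpos} {n : Submodule K A} {hn0 : n ≤ 𝒜 0}
    {hmul : ∀ a ∈ 𝒜 0, ∀ x ∈ n, a * x ∈ n}
    (h : (1 : A) ∈ supIdeal 𝒜 hpos hn0 hmul) : (1 : A) ∈ n := by
  have h2 := decompose_zero_mem_of_mem_sup 𝒜 hn0 h
  rwa [DirectSum.decompose_of_mem_same 𝒜 (SetLike.one_mem_graded 𝒜)] at h2

lemma mem_sup_of_isHom {m : Ideal A} (hm : m.IsHomogeneous 𝒜) {x : A} (hx : x ∈ m) :
    x ∈ ((m.restrictScalars K ⊓ 𝒜 0) ⊔ Jhom 𝒜 : Submodule K A) := by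
  have h0 : (DirectSum.decompose 𝒜 x 0 : A) ∈ m := hm 0 hx
  have hJ := sub_decompose_zero_mem_Jhom 𝒜 x
  have hxx : x = (DirectSum.decompose 𝒜 x 0 : A) + (x - (DirectSum.decompose 𝒜 x 0 : A)) := by
    abel
  rw [hxx]
  exact Submodule.add_mem _
    (Submodule.mem_sup_left ⟨h0, SetLike.coe_mem _⟩) (Submodule.mem_sup_right hJ)

lemma Jhom_le_of_max (hpos : ∀ γ₁ γ₂ : Γ, γ₁ + γ₂ = 0 → γ₁ = 0 ∧ γ₂ = 0)
    {m : Ideal A} (hm : m.IsHomogeneous 𝒜) (hne : m ≠ ⊤)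
    (hmax : ∀ I : Ideal A, I.IsHomogeneous 𝒜 → m < I → I = ⊤) :
    Jhom 𝒜 ≤ m.restrictScalars K := by
  have hbot : ∀ a ∈ 𝒜 0, ∀ x ∈ (⊥ : Submodule K A), a * x ∈ (⊥ : Submodule K A) := by
    rintro a _ x hx
    simp only [Submodule.mem_bot] at hx ⊢
    rw [hx, mul_zero]
  set JI : Ideal A := supIdeal 𝒜 hpos bot_le hbot with hJI
  have hm' : (m ⊔ JI).IsHomogeneous 𝒜 := by
    intro i r hr
    obtain ⟨y, hy, s, hs, rfl⟩ := Submodule.mem_sup.mp hr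
    have h1 : (DirectSum.decompose 𝒜 (y + s) i : A)
        = (DirectSum.decompose 𝒜 y i : A) + (DirectSum.decompose 𝒜 s i : A) := by
      simp [DirectSum.decompose_add]
    rw [h1]
    exact Submodule.add_mem _ (Submodule.mem_sup_left (hm i hy))
      (Submodule.mem_sup_right (isHom_sup 𝒜 (bot_le : (⊥ : Submodule K A) ≤ 𝒜 0) i hs))
  have hone : (1 : A) ∉ m ⊔ JI := by
    intro h1
    obtain ⟨y, hy, s, hs, heq⟩ := Submodule.mem_sup.mp h1
    have hdec : (DirectSum.decompose 𝒜 (y + s) 0 : A) = 1 := by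
      rw [heq, DirectSum.decompose_of_mem_same 𝒜 (SetLike.one_mem_graded 𝒜)]
    have hsz : (DirectSum.decompose 𝒜 s 0 : A) = 0 := by
      have := decompose_zero_mem_of_mem_sup 𝒜 (bot_le : (⊥ : Submodule K A) ≤ 𝒜 0) hs
      simpa using this
    have hy0 : (DirectSum.decompose 𝒜 y 0 : A) ∈ m := hm 0 hy
    have h2 : (DirectSum.decompose 𝒜 (y + s) 0 : A)
        = (DirectSum.decompose 𝒜 y 0 : A) := by
      simp [DirectSum.decompose_add, hsz]
    rw [h2] at hdec
    exact hne ((Ideal.eq_top_iff_one _).mpr (hdec ▸ hy0))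
  have heq : m ⊔ JI = m := by
    by_contra hne2
    have hlt : m < m ⊔ JI := lt_of_le_of_ne le_sup_left (fun h => hne2 h.symm)
    exact hone ((hmax _ hm' hlt) ▸ Submodule.mem_top)
  intro x hx
  have : x ∈ JI := Submodule.mem_sup_right hx
  exact heq ▸ (Submodule.mem_sup_right this : x ∈ m ⊔ JI)

lemma inf_isMax (hpos : ∀ γ₁ γ₂ : Γ, γ₁ + γ₂ = 0 → γ₁ = 0 ∧ γ₂ = 0)
    {m : Ideal A} (hm : m.IsHomogeneous 𝒜) (hne : m ≠ ⊤)
    (hmax : ∀ I : Ideal A, I.IsHomogeneous 𝒜 → m < I → I = ⊤) :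
    IsMaxLeftIdealOfDegZero (𝒜 0) (m.restrictScalars K ⊓ 𝒜 0) := by
  refine ⟨inf_le_right, ?_, ?_, ?_⟩
  · rintro a ha x ⟨hx1, hx2⟩
    refine ⟨Ideal.mul_mem_left m a hx1, ?_⟩
    have := SetLike.mul_mem_graded ha hx2
    rwa [add_zero] at this
  · rintro ⟨h1, -⟩
    exact hne ((Ideal.eq_top_iff_one _).mpr h1)
  · intro n' hn'0 hmul' h1' hle
    set I : Ideal A := supIdeal 𝒜 hpos hn'0 hmul' with hI
    have hIhom : I.IsHomogeneous 𝒜 := supIdeal_isHomogeneous 𝒜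
    have hmI : m ≤ I := by
      intro y hy
      have h2 := mem_sup_of_isHom 𝒜 hm hy
      exact sup_le_sup_right hle (Jhom 𝒜) h2
    have hIne : I ≠ ⊤ := by
      intro htop
      exact h1' (one_mem_supIdeal 𝒜 (htop ▸ Submodule.mem_top))
    have hmeq : m = I := by
      by_contra hne2
      exact hIne (hmax I hIhom (lt_of_le_of_ne hmI hne2))
    refine le_antisymm (fun x hx => ?_) hle
    have hxI : x ∈ I := Submodule.mem_sup_left hx
    exact ⟨hmeq ▸ hxI, hn'0 hx⟩

end helpers2

/-- Over a positive monoid, the graded radical (the intersection of all maximal graded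
left ideals) equals `Rad(A_ε) ⊕ ⨁_{γ ≠ ε} A_γ`. -/
theorem stmt2 {K : Type*} [Field K] {Γ : Type*} [AddMonoid Γ] [DecidableEq Γ]
    {A : Type*} [Ring A] [Algebra K A] (𝒜 : Γ → Submodule K A) [GradedAlgebra 𝒜]
    (hpos : ∀ γ₁ γ₂ : Γ, γ₁ + γ₂ = 0 → γ₁ = 0 ∧ γ₂ = 0) :
    (sInf {m : Ideal A | m.IsHomogeneous 𝒜 ∧ m ≠ ⊤ ∧
        ∀ I : Ideal A, I.IsHomogeneous 𝒜 → m < I → I = ⊤}).restrictScalars K =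
      sInf {n : Submodule K A | IsMaxLeftIdealOfDegZero (𝒜 0) n} ⊔
        (⨆ γ : Γ, ⨆ _ : γ ≠ 0, 𝒜 γ) := by
  classical
  rw [show (⨆ γ : Γ, ⨆ _ : γ ≠ 0, 𝒜 γ : Submodule K A) = Jhom 𝒜 from rfl]
  apply le_antisymm
  · intro x hx
    rw [Submodule.restrictScalars_mem, Submodule.mem_sInf] at hx
    rw [Submodule.mem_sup]
    refine ⟨(DirectSum.decompose 𝒜 x 0 : A), ?_,
      x - (DirectSum.decompose 𝒜 x 0 : A), sub_decompose_zero_mem_Jhom 𝒜 x, by abel⟩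
    rw [Submodule.mem_sInf]
    rintro n ⟨hn0, hmul, h1, hmax⟩
    have hmem : x ∈ supIdeal 𝒜 hpos hn0 hmul := by
      apply hx
      refine ⟨supIdeal_isHomogeneous 𝒜, ?_, ?_⟩
      · intro htop
        exact h1 (one_mem_supIdeal 𝒜 (htop ▸ Submodule.mem_top))
      · intro I hI hlt
        by_cases h1I : (1 : A) ∈ I
        · exact (Ideal.eq_top_iff_one _).mpr h1I
        · exfalso
          have hmul' : ∀ a ∈ 𝒜 0, ∀ y ∈ (I.restrictScalars K ⊓ 𝒜 0 : Submodule K A),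
              a * y ∈ (I.restrictScalars K ⊓ 𝒜 0 : Submodule K A) := by
            rintro a ha y ⟨hy1, hy2⟩
            refine ⟨Ideal.mul_mem_left I a hy1, ?_⟩
            have := SetLike.mul_mem_graded ha hy2
            rwa [add_zero] at this
          have h1' : (1 : A) ∉ (I.restrictScalars K ⊓ 𝒜 0 : Submodule K A) :=
            fun h => h1I h.1
          have hnle : n ≤ I.restrictScalars K ⊓ 𝒜 0 :=
            fun y hy => ⟨hlt.le (Submodule.mem_sup_left hy), hn0 hy⟩
          have heq := hmax _ inf_le_right hmul' h1' hnle
          have hIle : I ≤ supIdeal 𝒜 hpos hn0 hmul := by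
            intro y hy
            have h2 := mem_sup_of_isHom 𝒜 hI hy
            rw [heq] at h2
            exact h2
          exact absurd (lt_of_lt_of_le hlt hIle) (lt_irrefl _)
    exact decompose_zero_mem_of_mem_sup 𝒜 hn0 hmem
  · rw [sup_le_iff]
    constructor
    · intro x hx
      rw [Submodule.restrictScalars_mem, Submodule.mem_sInf]
      rintro m ⟨hm, hne, hmax⟩
      have hn : IsMaxLeftIdealOfDegZero (𝒜 0) (m.restrictScalars K ⊓ 𝒜 0) :=
        inf_isMax 𝒜 hpos hm hne hmax
      exact (Submodule.mem_sInf.mp hx _ hn).1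
    · intro x hx
      rw [Submodule.restrictScalars_mem, Submodule.mem_sInf]
      rintro m ⟨hm, hne, hmax⟩
      exact Jhom_le_of_max 𝒜 hpos hm hne hmax hx
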